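/- Let ζ = e^{2πi/3} and ρ : ℂ⁴ → ℂ⁴, ρ(u₁,u₂,u₃,u₄) = (ζu₁, ζu₂, ζ²u₃, ζu₄). With μ = du₁, ν = du₂, θ = du₃ − u₂ du₁, η = du₄, the forms α = μ∧μ̄, β₁ = ν∧ν̄, β₂ = ν∧η̄, β₃ = ν̄∧η, ξ₁ = −θ∧μ̄∧ν̄, ξ₂ = −θ∧μ̄∧η̄, ξ₃ = θ̄∧μ∧η are all ρ-invariant: ρ*α = α, ρ*βᵢ = βᵢ and ρ*ξᵢ = ξᵢ for i = 1,2,3. -/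

import Mathlib

noncomputable section

open Complex

/-- A `1`-form associated to an `ℝ`-linear functional. -/
def oneForm {E : Type*} [AddCommGroup E] [Module ℝ E] (f : E →ₗ[ℝ] ℂ) :
    E [⋀^Fin 1]→ₗ[ℝ] ℂ :=
  AlternatingMap.ofSubsingleton ℝ E ℂ (0 : Fin 1) f

/-- The wedge product of complex-valued alternating forms, via `AlternatingMap.domCoprod`
(the sum over shuffles with signs). -/
def wedge {E : Type*} [AddCommGroup E] [Module ℝ E] {a b : ℕ}
    (f : E [⋀^Fin a]→ₗ[ℝ] ℂ) (g : E [⋀^Fin b]→ₗ[ℝ] ℂ) :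
    E [⋀^Fin (a + b)]→ₗ[ℝ] ℂ :=
  ((LinearMap.mul' ℝ ℂ).compAlternatingMap (f.domCoprod g)).domDomCongr finSumFinEquiv

/-- The exterior derivative of a field of alternating `k`-forms, as a raw function of
`k+1` vectors: `(dω)ₓ(v₀,…,v_k) = Σᵢ (-1)ⁱ (∂_{vᵢ} ω(v₀,…,v̂ᵢ,…,v_k))ₓ`. -/
def rawExtDeriv {E : Type*} [NormedAddCommGroup E] [NormedSpace ℝ E] {k : ℕ}
    (ω : E → E [⋀^Fin k]→ₗ[ℝ] ℂ) : E → (Fin (k + 1) → E) → ℂ :=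
  fun x v => ∑ i : Fin (k + 1),
    (-1 : ℂ) ^ (i : ℕ) * fderiv ℝ (fun y => ω y (fun j => v (i.succAbove j))) x (v i)

/-- Complex conjugation, as an `ℝ`-linear map `ℂ → ℂ`. -/
def conjLM : ℂ →ₗ[ℝ] ℂ := Complex.conjAe.toLinearMap

/-- Complex conjugation of a complex-valued form. -/
def conjForm {E : Type*} [AddCommGroup E] [Module ℝ E] {k : ℕ}
    (f : E [⋀^Fin k]→ₗ[ℝ] ℂ) : E [⋀^Fin k]→ₗ[ℝ] ℂ :=
  conjLM.compAlternatingMap f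

/-- The pullback of a field of `k`-forms under a map `f`, defined using the derivative
of `f`: `(f*ω)ₓ(v₁,…,v_k) = ω_{f(x)}(df ₓ v₁, …, df ₓ v_k)`. -/
def pullback {E : Type*} [NormedAddCommGroup E] [NormedSpace ℝ E] {k : ℕ}
    (f : E → E) (ω : E → E [⋀^Fin k]→ₗ[ℝ] ℂ) : E → (Fin k → E) → ℂ :=
  fun x v => ω (f x) fun i => fderiv ℝ f x (v i)

/-- `ℂ⁴`, viewed as the real manifold `ℝ⁸`. -/
abbrev E4 : Type := ℂ × ℂ × ℂ × ℂ

-- the coordinate functions `u₁, u₂, u₃, u₄` as `ℝ`-linear maps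
def pr1 : E4 →ₗ[ℝ] ℂ := LinearMap.fst ℝ ℂ (ℂ × ℂ × ℂ)
def pr2 : E4 →ₗ[ℝ] ℂ := (LinearMap.fst ℝ ℂ (ℂ × ℂ)).comp (LinearMap.snd ℝ ℂ (ℂ × ℂ × ℂ))
def pr3 : E4 →ₗ[ℝ] ℂ :=
  (LinearMap.fst ℝ ℂ ℂ).comp ((LinearMap.snd ℝ ℂ (ℂ × ℂ)).comp (LinearMap.snd ℝ ℂ (ℂ × ℂ × ℂ)))
def pr4 : E4 →ₗ[ℝ] ℂ :=
  (LinearMap.snd ℝ ℂ ℂ).comp ((LinearMap.snd ℝ ℂ (ℂ × ℂ)).comp (LinearMap.snd ℝ ℂ (ℂ × ℂ × ℂ)))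

/-- `μ = du₁`. -/
def μ : E4 → E4 [⋀^Fin 1]→ₗ[ℝ] ℂ := fun _ => oneForm pr1
/-- `ν = du₂`. -/
def ν : E4 → E4 [⋀^Fin 1]→ₗ[ℝ] ℂ := fun _ => oneForm pr2
/-- `θ = du₃ - u₂ du₁`. -/
def θF : E4 → E4 [⋀^Fin 1]→ₗ[ℝ] ℂ := fun u => oneForm pr3 - u.2.1 • oneForm pr1
/-- `η = du₄`. -/
def η : E4 → E4 [⋀^Fin 1]→ₗ[ℝ] ℂ := fun _ => oneForm pr4

def μb : E4 → E4 [⋀^Fin 1]→ₗ[ℝ] ℂ := fun u => conjForm (μ u)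
def νb : E4 → E4 [⋀^Fin 1]→ₗ[ℝ] ℂ := fun u => conjForm (ν u)
def θb : E4 → E4 [⋀^Fin 1]→ₗ[ℝ] ℂ := fun u => conjForm (θF u)
def ηb : E4 → E4 [⋀^Fin 1]→ₗ[ℝ] ℂ := fun u => conjForm (η u)

/-- The map `ρ(u₁,u₂,u₃,u₄) = (ζu₁, ζu₂, ζ²u₃, ζu₄)`. -/
def ρmap (ζ : ℂ) (u : E4) : E4 :=
  (ζ * u.1, ζ * u.2.1, ζ ^ 2 * u.2.2.1, ζ * u.2.2.2)

/-- `α = μ∧μ̄`. -/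
def αF : E4 → E4 [⋀^Fin 2]→ₗ[ℝ] ℂ := fun u => wedge (μ u) (μb u)
/-- `β₁ = ν∧ν̄`. -/
def β₁F : E4 → E4 [⋀^Fin 2]→ₗ[ℝ] ℂ := fun u => wedge (ν u) (νb u)
/-- `β₂ = ν∧η̄`. -/
def β₂F : E4 → E4 [⋀^Fin 2]→ₗ[ℝ] ℂ := fun u => wedge (ν u) (ηb u)
/-- `β₃ = ν̄∧η`. -/
def β₃F : E4 → E4 [⋀^Fin 2]→ₗ[ℝ] ℂ := fun u => wedge (νb u) (η u)
/-- `ξ₁ = −θ∧μ̄∧ν̄`. -/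
def ξ₁F : E4 → E4 [⋀^Fin 3]→ₗ[ℝ] ℂ := fun u => -wedge (wedge (θF u) (μb u)) (νb u)
/-- `ξ₂ = −θ∧μ̄∧η̄`. -/
def ξ₂F : E4 → E4 [⋀^Fin 3]→ₗ[ℝ] ℂ := fun u => -wedge (wedge (θF u) (μb u)) (ηb u)
/-- `ξ₃ = θ̄∧μ∧η`. -/
def ξ₃F : E4 → E4 [⋀^Fin 3]→ₗ[ℝ] ℂ := fun u => wedge (wedge (θb u) (μ u)) (η u)

section AuxWedge

variable {E F : Type*} [AddCommGroup E] [Module ℝ E] [AddCommGroup F] [Module ℝ F] {a b : ℕ}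

theorem wedge_smul_left (c : ℂ) (f : E [⋀^Fin a]→ₗ[ℝ] ℂ) (g : E [⋀^Fin b]→ₗ[ℝ] ℂ) :
    wedge (c • f) g = c • wedge f g := by
  ext v
  simp only [wedge, AlternatingMap.domDomCongr_apply, LinearMap.compAlternatingMap_apply,
    AlternatingMap.domCoprod_apply, MultilinearMap.sum_apply, map_sum, AlternatingMap.smul_apply,
    Finset.smul_sum]
  refine Finset.sum_congr rfl fun σ _ => ?_
  induction σ using Quotient.inductionOn' with
  | h p =>
    rw [AlternatingMap.domCoprod.summand_mk'', AlternatingMap.domCoprod.summand_mk'']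
    simp only [MultilinearMap.smul_apply, MultilinearMap.domDomCongr_apply,
      MultilinearMap.domCoprod_apply, AlternatingMap.coe_smul, Pi.smul_apply,
      TensorProduct.smul_tmul', map_smul, LinearMap.mul'_apply, smul_comm (Equiv.Perm.sign p)]
    simp [smul_eq_mul]
    simp only [Units.smul_def, zsmul_eq_mul]
    ring

theorem wedge_smul_right (c : ℂ) (f : E [⋀^Fin a]→ₗ[ℝ] ℂ) (g : E [⋀^Fin b]→ₗ[ℝ] ℂ) :
    wedge f (c • g) = c • wedge f g := by
  ext v
  simp only [wedge, AlternatingMap.domDomCongr_apply, LinearMap.compAlternatingMap_apply,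
    AlternatingMap.domCoprod_apply, MultilinearMap.sum_apply, map_sum, AlternatingMap.smul_apply,
    Finset.smul_sum]
  refine Finset.sum_congr rfl fun σ _ => ?_
  induction σ using Quotient.inductionOn' with
  | h p =>
    rw [AlternatingMap.domCoprod.summand_mk'', AlternatingMap.domCoprod.summand_mk'']
    simp only [MultilinearMap.smul_apply, MultilinearMap.domDomCongr_apply,
      MultilinearMap.domCoprod_apply, AlternatingMap.coe_smul, Pi.smul_apply,
      TensorProduct.tmul_smul, TensorProduct.smul_tmul', map_smul, LinearMap.mul'_apply,
      smul_comm (Equiv.Perm.sign p)]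
    simp [smul_eq_mul]
    simp only [Units.smul_def, zsmul_eq_mul]
    ring

theorem wedge_compLinearMap (L : F →ₗ[ℝ] E) (f : E [⋀^Fin a]→ₗ[ℝ] ℂ) (g : E [⋀^Fin b]→ₗ[ℝ] ℂ) :
    (wedge f g).compLinearMap L = wedge (f.compLinearMap L) (g.compLinearMap L) := by
  ext v
  simp only [wedge, AlternatingMap.domDomCongr_apply, LinearMap.compAlternatingMap_apply,
    AlternatingMap.domCoprod_apply, MultilinearMap.sum_apply, map_sum,
    AlternatingMap.compLinearMap_apply]
  refine Finset.sum_congr rfl fun σ _ => ?_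
  induction σ using Quotient.inductionOn' with
  | h p =>
    rw [AlternatingMap.domCoprod.summand_mk'', AlternatingMap.domCoprod.summand_mk'']
    simp [MultilinearMap.smul_apply, MultilinearMap.domDomCongr_apply,
      MultilinearMap.domCoprod_apply, AlternatingMap.compLinearMap_apply, Function.comp]

theorem wedge_neg_left (f : E [⋀^Fin a]→ₗ[ℝ] ℂ) (g : E [⋀^Fin b]→ₗ[ℝ] ℂ) :
    wedge (-f) g = -wedge f g := by
  have := wedge_smul_left (-1 : ℂ) f g
  simpa [neg_one_smul] using this

theorem neg_compLinearMap {k : ℕ} (f : E [⋀^Fin k]→ₗ[ℝ] ℂ) (L : F →ₗ[ℝ] E) :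
    (-f).compLinearMap L = -(f.compLinearMap L) := rfl

theorem smul_eq_self' {k : ℕ} (f : E [⋀^Fin k]→ₗ[ℝ] ℂ) {c : ℂ} (hc : c = 1) : c • f = f := by
  rw [hc, one_smul]

end AuxWedge

/-- multiplication by a fixed complex number, as a continuous `ℝ`-linear map. -/
def mulCLM (c : ℂ) : ℂ →L[ℝ] ℂ := c • ContinuousLinearMap.id ℝ ℂ

/-- the linear map `ρ`, bundled. -/
def ρCLM (ζ : ℂ) : E4 →L[ℝ] E4 :=
  (mulCLM ζ).prodMap ((mulCLM ζ).prodMap ((mulCLM (ζ ^ 2)).prodMap (mulCLM ζ)))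

theorem ρmap_eq (ζ : ℂ) : ρmap ζ = ⇑(ρCLM ζ) := by
  funext u
  simp [ρmap, ρCLM, mulCLM, Prod.map, smul_eq_mul]

theorem fderiv_ρ (ζ : ℂ) (x : E4) : fderiv ℝ (ρmap ζ) x = ρCLM ζ := by
  rw [ρmap_eq]; exact (ρCLM ζ).fderiv

theorem oneForm_comp_ρ1 (ζ : ℂ) :
    (oneForm pr1).compLinearMap (ρCLM ζ).toLinearMap = ζ • oneForm pr1 := by
  ext v
  simp [oneForm, pr1, ρCLM, mulCLM, smul_eq_mul]

theorem oneForm_comp_ρ2 (ζ : ℂ) :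
    (oneForm pr2).compLinearMap (ρCLM ζ).toLinearMap = ζ • oneForm pr2 := by
  ext v
  simp [oneForm, pr2, ρCLM, mulCLM, smul_eq_mul]

theorem oneForm_comp_ρ3 (ζ : ℂ) :
    (oneForm pr3).compLinearMap (ρCLM ζ).toLinearMap = (ζ ^ 2) • oneForm pr3 := by
  ext v
  simp [oneForm, pr3, ρCLM, mulCLM, smul_eq_mul]

theorem oneForm_comp_ρ4 (ζ : ℂ) :
    (oneForm pr4).compLinearMap (ρCLM ζ).toLinearMap = ζ • oneForm pr4 := by
  ext v
  simp [oneForm, pr4, ρCLM, mulCLM, smul_eq_mul]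

theorem conjForm_smul' {E : Type*} [AddCommGroup E] [Module ℝ E] {k : ℕ} (c : ℂ)
    (f : E [⋀^Fin k]→ₗ[ℝ] ℂ) :
    conjForm (c • f) = (starRingEnd ℂ c) • conjForm f := by
  ext v
  simp [conjForm, conjLM]

theorem conjForm_compLinearMap {E F : Type*} [AddCommGroup E] [Module ℝ E] [AddCommGroup F]
    [Module ℝ F] {k : ℕ} (f : E [⋀^Fin k]→ₗ[ℝ] ℂ) (L : F →ₗ[ℝ] E) :
    (conjForm f).compLinearMap L = conjForm (f.compLinearMap L) := rfl

theorem μ_comp (ζ : ℂ) (x : E4) :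
    (μ (ρmap ζ x)).compLinearMap (ρCLM ζ).toLinearMap = ζ • μ x :=
  oneForm_comp_ρ1 ζ

theorem ν_comp (ζ : ℂ) (x : E4) :
    (ν (ρmap ζ x)).compLinearMap (ρCLM ζ).toLinearMap = ζ • ν x :=
  oneForm_comp_ρ2 ζ

theorem η_comp (ζ : ℂ) (x : E4) :
    (η (ρmap ζ x)).compLinearMap (ρCLM ζ).toLinearMap = ζ • η x :=
  oneForm_comp_ρ4 ζ

theorem θ_comp (ζ : ℂ) (x : E4) :
    (θF (ρmap ζ x)).compLinearMap (ρCLM ζ).toLinearMap = (ζ ^ 2) • θF x := by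
  ext v
  simp [θF, oneForm, pr1, pr3, ρmap, ρCLM, mulCLM, smul_eq_mul]
  ring

theorem μb_comp (ζ : ℂ) (x : E4) :
    (μb (ρmap ζ x)).compLinearMap (ρCLM ζ).toLinearMap = (starRingEnd ℂ ζ) • μb x := by
  rw [μb, conjForm_compLinearMap]
  rw [show (μ (ρmap ζ x)).compLinearMap (ρCLM ζ).toLinearMap = ζ • μ x from μ_comp ζ x]
  rw [conjForm_smul']
  rfl

theorem νb_comp (ζ : ℂ) (x : E4) :
    (νb (ρmap ζ x)).compLinearMap (ρCLM ζ).toLinearMap = (starRingEnd ℂ ζ) • νb x := by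
  rw [νb, conjForm_compLinearMap]
  rw [show (ν (ρmap ζ x)).compLinearMap (ρCLM ζ).toLinearMap = ζ • ν x from ν_comp ζ x]
  rw [conjForm_smul']
  rfl

theorem ηb_comp (ζ : ℂ) (x : E4) :
    (ηb (ρmap ζ x)).compLinearMap (ρCLM ζ).toLinearMap = (starRingEnd ℂ ζ) • ηb x := by
  rw [ηb, conjForm_compLinearMap]
  rw [show (η (ρmap ζ x)).compLinearMap (ρCLM ζ).toLinearMap = ζ • η x from η_comp ζ x]
  rw [conjForm_smul']
  rfl

theorem θb_comp (ζ : ℂ) (x : E4) :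
    (θb (ρmap ζ x)).compLinearMap (ρCLM ζ).toLinearMap = (starRingEnd ℂ (ζ ^ 2)) • θb x := by
  rw [θb, conjForm_compLinearMap, θ_comp, conjForm_smul']
  rfl

-- E4-specialized versions (so that `simp` matches the instances appearing in the goal)
theorem wedge_smul_leftE {a b : ℕ} (c : ℂ) (f : E4 [⋀^Fin a]→ₗ[ℝ] ℂ) (g : E4 [⋀^Fin b]→ₗ[ℝ] ℂ) :
    wedge (c • f) g = c • wedge f g := wedge_smul_left c f g

theorem wedge_smul_rightE {a b : ℕ} (c : ℂ) (f : E4 [⋀^Fin a]→ₗ[ℝ] ℂ) (g : E4 [⋀^Fin b]→ₗ[ℝ] ℂ) :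
    wedge f (c • g) = c • wedge f g := wedge_smul_right c f g

theorem wedge_compLinearMapE {a b : ℕ} (L : E4 →ₗ[ℝ] E4) (f : E4 [⋀^Fin a]→ₗ[ℝ] ℂ)
    (g : E4 [⋀^Fin b]→ₗ[ℝ] ℂ) :
    (wedge f g).compLinearMap L = wedge (f.compLinearMap L) (g.compLinearMap L) :=
  wedge_compLinearMap L f g

theorem neg_compLinearMapE {k : ℕ} (f : E4 [⋀^Fin k]→ₗ[ℝ] ℂ) (L : E4 →ₗ[ℝ] E4) :
    (-f).compLinearMap L = -(f.compLinearMap L) := rfl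

theorem smul_eq_selfE {k : ℕ} (f : E4 [⋀^Fin k]→ₗ[ℝ] ℂ) {c : ℂ} (hc : c = 1) : c • f = f := by
  rw [hc, one_smul]

theorem pullback_eq_of_comp {k : ℕ} (ζ : ℂ) (ω : E4 → E4 [⋀^Fin k]→ₗ[ℝ] ℂ)
    (h : ∀ x, (ω (ρmap ζ x)).compLinearMap (ρCLM ζ).toLinearMap = ω x) :
    pullback (ρmap ζ) ω = fun x => ⇑(ω x) := by
  funext x
  funext v
  show ω (ρmap ζ x) (fun i => fderiv ℝ (ρmap ζ) x (v i)) = ω x v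
  rw [fderiv_ρ]
  rw [show (fun i => (ρCLM ζ) (v i)) = (fun i => (ρCLM ζ).toLinearMap (v i)) from rfl,
    ← AlternatingMap.compLinearMap_apply, h]


/-- For `ζ = e^{2πi/3}` and `ρ(u₁,u₂,u₃,u₄) = (ζu₁,ζu₂,ζ²u₃,ζu₄)`, the forms `α = μ∧μ̄`,
`β₁ = ν∧ν̄`, `β₂ = ν∧η̄`, `β₃ = ν̄∧η`, `ξ₁ = −θ∧μ̄∧ν̄`, `ξ₂ = −θ∧μ̄∧η̄`, `ξ₃ = θ̄∧μ∧η` are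
all `ρ`-invariant: `ρ*α = α`, `ρ*βᵢ = βᵢ`, `ρ*ξᵢ = ξᵢ` for `i = 1,2,3`. -/

theorem forms_are_rho_invariant (ζ : ℂ)
    (hζ : ζ = Complex.exp (2 * Real.pi * Complex.I / 3)) :
    pullback (ρmap ζ) αF = (fun x => ⇑(αF x)) ∧
    pullback (ρmap ζ) β₁F = (fun x => ⇑(β₁F x)) ∧
    pullback (ρmap ζ) β₂F = (fun x => ⇑(β₂F x)) ∧
    pullback (ρmap ζ) β₃F = (fun x => ⇑(β₃F x)) ∧
    pullback (ρmap ζ) ξ₁F = (fun x => ⇑(ξ₁F x)) ∧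
    pullback (ρmap ζ) ξ₂F = (fun x => ⇑(ξ₂F x)) ∧
    pullback (ρmap ζ) ξ₃F = (fun x => ⇑(ξ₃F x)) := by
  have hz : ζ * (starRingEnd ℂ) ζ = 1 := by
    rw [hζ, ← Complex.exp_conj, ← Complex.exp_add]
    have : (starRingEnd ℂ) (2 * ↑Real.pi * Complex.I / 3) =
        -(2 * ↑Real.pi * Complex.I / 3) := by
      simp only [map_div₀, map_mul, map_ofNat, Complex.conj_ofReal, Complex.conj_I]
      ring
    rw [this, add_neg_cancel, Complex.exp_zero]
  have hz2 : ζ ^ 2 * (starRingEnd ℂ) ζ * (starRingEnd ℂ) ζ = 1 := by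
    have : ζ ^ 2 * (starRingEnd ℂ) ζ * (starRingEnd ℂ) ζ = (ζ * (starRingEnd ℂ) ζ) ^ 2 := by ring
    rw [this, hz, one_pow]
  have hz3 : (starRingEnd ℂ) (ζ ^ 2) * ζ * ζ = 1 := by
    rw [map_pow]
    have : (starRingEnd ℂ) ζ ^ 2 * ζ * ζ = (ζ * (starRingEnd ℂ) ζ) ^ 2 := by ring
    rw [this, hz, one_pow]
  refine ⟨?_, ?_, ?_, ?_, ?_, ?_, ?_⟩
  · refine pullback_eq_of_comp ζ _ fun x => ?_
    rw [αF, αF, wedge_compLinearMapE, μ_comp, μb_comp]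
    simp only [wedge_smul_leftE, wedge_smul_rightE, smul_smul]
    refine smul_eq_selfE _ ?_
    linear_combination hz
  · refine pullback_eq_of_comp ζ _ fun x => ?_
    rw [β₁F, β₁F, wedge_compLinearMapE, ν_comp, νb_comp]
    simp only [wedge_smul_leftE, wedge_smul_rightE, smul_smul]
    refine smul_eq_selfE _ ?_
    linear_combination hz
  · refine pullback_eq_of_comp ζ _ fun x => ?_
    rw [β₂F, β₂F, wedge_compLinearMapE, ν_comp, ηb_comp]
    simp only [wedge_smul_leftE, wedge_smul_rightE, smul_smul]
    refine smul_eq_selfE _ ?_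
    linear_combination hz
  · refine pullback_eq_of_comp ζ _ fun x => ?_
    rw [β₃F, β₃F, wedge_compLinearMapE, νb_comp, η_comp]
    simp only [wedge_smul_leftE, wedge_smul_rightE, smul_smul]
    refine smul_eq_selfE _ ?_
    linear_combination hz
  · refine pullback_eq_of_comp ζ _ fun x => ?_
    rw [ξ₁F, ξ₁F, neg_compLinearMapE, neg_inj, wedge_compLinearMapE, wedge_compLinearMapE,
      θ_comp, μb_comp, νb_comp]
    simp only [wedge_smul_leftE, wedge_smul_rightE, smul_smul]
    refine smul_eq_selfE _ ?_
    linear_combination (ζ * (starRingEnd ℂ) ζ + 1) * hz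
  · refine pullback_eq_of_comp ζ _ fun x => ?_
    rw [ξ₂F, ξ₂F, neg_compLinearMapE, neg_inj, wedge_compLinearMapE, wedge_compLinearMapE,
      θ_comp, μb_comp, ηb_comp]
    simp only [wedge_smul_leftE, wedge_smul_rightE, smul_smul]
    refine smul_eq_selfE _ ?_
    linear_combination (ζ * (starRingEnd ℂ) ζ + 1) * hz
  · refine pullback_eq_of_comp ζ _ fun x => ?_
    rw [ξ₃F, ξ₃F, wedge_compLinearMapE, wedge_compLinearMapE, θb_comp, μ_comp, η_comp]
    simp only [wedge_smul_leftE, wedge_smul_rightE, smul_smul, map_pow]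
    refine smul_eq_selfE _ ?_
    linear_combination (ζ * (starRingEnd ℂ) ζ + 1) * hz
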